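/- Let α be an algebraic integer of degree d with minimal polynomial f ∈ ℤ[X] over ℚ and conjugates α_1, …, α_d, and let p be a prime. Then the rational integer ∏_{i=1}^{d} f(α_i^p) = ∏_{i=1}^{d} ∏_{j=1}^{d} (α_i^p − α_j) is divisible by p^d. -/

import Mathlib

open Polynomial

/-- A product `∏ i, g(αs i)` of values of an integer polynomial over a full set of conjugates
is (the cast of) an integer, given that the elementary symmetric functions of the `αs`
take integer values. -/
lemma aux_prod_aeval_int (d : ℕ) (αs : Fin d → ℂ) (c : Fin d → ℤ)
    (hc : ∀ i : Fin d, MvPolynomial.aeval αs (MvPolynomial.esymm (Fin d) ℤ ((i : ℕ) + 1))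
      = (c i : ℂ))
    (g : Polynomial ℤ) :
    ∃ n : ℤ, (∏ i, Polynomial.aeval (αs i) g) = (n : ℂ) := by
  classical
  set P : MvPolynomial (Fin d) ℤ := ∏ i, Polynomial.aeval (MvPolynomial.X i) g with hP
  have hsymm : P.IsSymmetric := by
    intro e
    rw [hP, map_prod]
    have h1 : ∀ i : Fin d, (MvPolynomial.rename (⇑e))
          (Polynomial.aeval (MvPolynomial.X (R := ℤ) i) g)
        = Polynomial.aeval (MvPolynomial.X (R := ℤ) (e i)) g := by
      intro i
      refine ((Polynomial.aeval_algHom_apply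
        (MvPolynomial.rename (⇑e) : MvPolynomial (Fin d) ℤ →ₐ[ℤ] MvPolynomial (Fin d) ℤ)
        (MvPolynomial.X i) g).symm).trans ?_
      rw [MvPolynomial.rename_X]
    simp_rw [h1]
    exact Equiv.prod_comp e fun j => Polynomial.aeval (MvPolynomial.X (R := ℤ) j) g
  obtain ⟨q, hq⟩ := MvPolynomial.esymmAlgHom_surjective (R := ℤ) (n := d)
    (le_of_eq (Fintype.card_fin d)) ⟨P, hsymm⟩
  have hq' : MvPolynomial.aeval
      (fun i : Fin d => MvPolynomial.esymm (Fin d) ℤ ((i : ℕ) + 1)) q = P := by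
    have := congrArg Subtype.val hq
    rwa [MvPolynomial.esymmAlgHom_apply] at this
  refine ⟨MvPolynomial.eval c q, ?_⟩
  have h2 : (MvPolynomial.aeval αs) P = ∏ i, Polynomial.aeval (αs i) g := by
    rw [hP, map_prod]
    congr 1
    funext i
    rw [← Polynomial.aeval_algHom_apply, MvPolynomial.aeval_X]
  rw [← h2, ← hq']
  have h3 := congrArg (fun (φ : MvPolynomial (Fin d) ℤ →ₐ[ℤ] ℂ) => φ q)
    (MvPolynomial.comp_aeval
      (fun i : Fin d => MvPolynomial.esymm (Fin d) ℤ ((i : ℕ) + 1))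
      (MvPolynomial.aeval (R := ℤ) αs))
  simp only [AlgHom.comp_apply] at h3
  rw [h3]
  simp_rw [hc]
  simpa [MvPolynomial.aeval_def, algebraMap_int_eq, Function.comp_def, MvPolynomial.eval₂_id]
    using (MvPolynomial.eval₂_comp_left (Int.castRingHom ℂ) (RingHom.id ℤ) c q).symm

theorem prime_power_divides_product
    (α : ℂ) (hint : IsIntegral ℤ α)
    (d : ℕ) (hd : (minpoly ℤ α).natDegree = d)
    (αs : Fin d → ℂ)
    (hconj : (minpoly ℤ α).map (Int.castRingHom ℂ)
      = ∏ i, (Polynomial.X - Polynomial.C (αs i)))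
    (p : ℕ) (hp : p.Prime) :
    ∃ m : ℤ, (∏ i, ∏ j, (αs i ^ p - αs j)) = ((p : ℂ)) ^ d * (m : ℂ) := by
  classical
  haveI := Fact.mk hp
  set f := minpoly ℤ α with hf
  -- Frobenius: `f(X^p) ≡ f(X)^p (mod p)`
  have hdvd : Polynomial.C (p : ℤ) ∣ f.comp (Polynomial.X ^ p) - f ^ p := by
    rw [Polynomial.C_dvd_iff_dvd_coeff]
    intro n
    have hmap : (f.comp (Polynomial.X ^ p) - f ^ p).map (Int.castRingHom (ZMod p)) = 0 := by
      rw [Polynomial.map_sub, Polynomial.map_comp, Polynomial.map_pow, Polynomial.map_pow,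
        Polynomial.map_X, sub_eq_zero]
      have h := Polynomial.map_frobenius_expand p (f.map (Int.castRingHom (ZMod p)))
      rw [ZMod.frobenius_zmod, Polynomial.map_id] at h
      rw [← h, Polynomial.expand_eq_comp_X_pow]
    have h2 := congrArg (fun q => Polynomial.coeff q n) hmap
    simp only [Polynomial.coeff_map, Polynomial.coeff_zero] at h2
    exact (ZMod.intCast_zmod_eq_zero_iff_dvd _ p).mp h2
  obtain ⟨g, hg⟩ := hdvd
  have hcomp : f.comp (Polynomial.X ^ p) = f ^ p + Polynomial.C (p : ℤ) * g := by
    rw [← hg]; ring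
  -- each `αs i` is a root of `f` over `ℂ`
  have hroot : ∀ i, Polynomial.eval (αs i) (f.map (Int.castRingHom ℂ)) = 0 := by
    intro i
    rw [hconj, Polynomial.eval_prod]
    refine Finset.prod_eq_zero (Finset.mem_univ i) ?_
    simp
  have hinner : ∀ i, (∏ j, (αs i ^ p - αs j))
      = (p : ℂ) * Polynomial.eval (αs i) (g.map (Int.castRingHom ℂ)) := by
    intro i
    have h1 : (∏ j, (αs i ^ p - αs j))
        = Polynomial.eval (αs i ^ p) (f.map (Int.castRingHom ℂ)) := by
      rw [hconj, Polynomial.eval_prod]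
      simp
    have h2 : Polynomial.eval (αs i ^ p) (f.map (Int.castRingHom ℂ))
        = Polynomial.eval (αs i) ((f.comp (Polynomial.X ^ p)).map (Int.castRingHom ℂ)) := by
      rw [Polynomial.map_comp, Polynomial.eval_comp]
      simp
    rw [h1, h2, hcomp, Polynomial.map_add, Polynomial.map_mul, Polynomial.map_pow,
      Polynomial.map_C, Polynomial.eval_add, Polynomial.eval_mul, Polynomial.eval_pow,
      hroot i, Polynomial.eval_C]
    rw [zero_pow hp.ne_zero, zero_add]
    simp only [eq_intCast]
    push_cast
    ring
  -- the elementary symmetric functions of the `αs` are integers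
  have hc : ∀ i : Fin d, MvPolynomial.aeval αs (MvPolynomial.esymm (Fin d) ℤ ((i : ℕ) + 1))
      = ((((-1) ^ ((i : ℕ) + 1) * f.coeff (d - ((i : ℕ) + 1)) : ℤ) : ℂ)) := by
    intro i
    set k : ℕ := (i : ℕ) + 1 with hk
    have hkd : k ≤ d := i.isLt
    set s : Multiset ℂ := Finset.univ.val.map αs with hs
    have hcard : Multiset.card s = d := by simp [hs]
    have hvieta := Multiset.prod_X_sub_C_coeff s
      (show d - k ≤ Multiset.card s by rw [hcard]; exact Nat.sub_le d k)
    rw [hcard, Nat.sub_sub_self hkd] at hvieta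
    have hprod : (s.map fun t => Polynomial.X - Polynomial.C t).prod
        = ∏ j, (Polynomial.X - Polynomial.C (αs j)) := by
      rw [hs, Multiset.map_map]
      rfl
    rw [hprod, ← hconj] at hvieta
    rw [Polynomial.coeff_map] at hvieta
    have hesymm : MvPolynomial.aeval αs (MvPolynomial.esymm (Fin d) ℤ k) = s.esymm k := by
      rw [MvPolynomial.aeval_esymm_eq_multiset_esymm, hs]
    rw [hesymm]
    have hsq : ((-1 : ℂ) ^ k) * ((-1 : ℂ) ^ k) = 1 := by
      rw [← pow_add]
      exact (neg_one_pow_eq_one_iff_even (by norm_num)).mpr ⟨k, by ring⟩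
    push_cast
    calc s.esymm k = ((-1 : ℂ) ^ k * (-1 : ℂ) ^ k) * s.esymm k := by rw [hsq, one_mul]
      _ = (-1 : ℂ) ^ k * ((f.coeff (d - k) : ℂ)) := by
          rw [mul_assoc, ← hvieta]
          simp only [eq_intCast]
  obtain ⟨n, hn⟩ := aux_prod_aeval_int d αs
    (fun i => (-1) ^ ((i : ℕ) + 1) * f.coeff (d - ((i : ℕ) + 1))) hc g
  refine ⟨n, ?_⟩
  have heval : ∀ i, Polynomial.aeval (αs i) g
      = Polynomial.eval (αs i) (g.map (Int.castRingHom ℂ)) := by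
    intro i
    rw [Polynomial.aeval_def, Polynomial.eval_map]
    rfl
  calc (∏ i, ∏ j, (αs i ^ p - αs j))
      = ∏ i, ((p : ℂ) * Polynomial.eval (αs i) (g.map (Int.castRingHom ℂ))) := by
        exact Finset.prod_congr rfl fun i _ => hinner i
    _ = (p : ℂ) ^ d * ∏ i, Polynomial.eval (αs i) (g.map (Int.castRingHom ℂ)) := by
        rw [Finset.prod_mul_distrib, Finset.prod_const, Finset.card_univ, Fintype.card_fin]
    _ = (p : ℂ) ^ d * (n : ℂ) := by
        rw [← hn]
        exact congrArg _ (Finset.prod_congr rfl fun i _ => (heval i).symm)
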